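/- Assume the principle PG(ℵ₀): for every d ≥ 1 and every coloring of (ω^ω)^d by finitely many colors, there exist somewhere dense sets D₁, …, D_d ⊆ ω^ω on which the coloring is constant. Then the Halpern–Läuchli theorem holds: for all finitely branching rooted trees T₁, …, T_d without terminal nodes in which every branch contains infinitely many splitting nodes, and every coloring f of the level product ⋃_m T₁(m) × ⋯ × T_d(m) by finitely many colors, there exist a level l, nodes tᵢ ∈ Tᵢ(l), a level n > l, and sets Dᵢ ⊆ Tᵢ(n) such that every immediate successor of tᵢ has a successor in Dᵢ and f is constant on D₁ × ⋯ × D_d. -/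

import Mathlib

open Set

/-- The basic open subset of Baire space determined by a finite sequence `s`. -/
def baireCyl (s : List ℕ) : Set (ℕ → ℕ) :=
  {x | ∀ i : ℕ, ∀ h : i < s.length, x i = s.get ⟨i, h⟩}

/-- `D` is somewhere dense in Baire space: dense in some basic open set. -/
def SomewhereDenseBaire (D : Set (ℕ → ℕ)) : Prop :=
  ∃ s : List ℕ, ∀ t : List ℕ, s <+: t → (D ∩ baireCyl t).Nonempty

/-- The principle `PG(ℵ₀)`: every coloring of a finite product of Baire spaces by
finitely many colors is constant on a product of somewhere dense sets. -/
def PGAlephZero : Prop :=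
  ∀ (d : ℕ), 1 ≤ d → ∀ (C : Type) (_ : Finite C)
    (f : (Fin d → (ℕ → ℕ)) → C),
    ∃ D : Fin d → Set (ℕ → ℕ), (∀ i, SomewhereDenseBaire (D i)) ∧
      ∃ c : C, ∀ x : Fin d → (ℕ → ℕ), (∀ i, x i ∈ D i) → f x = c

/-- A tree here is a set of finite sequences of naturals: nonempty, closed under prefixes,
with every node having at least one but finitely many immediate successors, and every
branch containing infinitely many splitting nodes. -/
structure GoodTree (T : Set (List ℕ)) : Prop where
  root : [] ∈ T
  prefixClosed : ∀ s t : List ℕ, s <+: t → t ∈ T → s ∈ T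
  succExists : ∀ t ∈ T, ∃ n : ℕ, t ++ [n] ∈ T
  finBranching : ∀ t ∈ T, {n : ℕ | t ++ [n] ∈ T}.Finite
  splitting : ∀ b : ℕ → ℕ, (∀ n : ℕ, (List.ofFn fun i : Fin n => b i) ∈ T) →
    ∀ m : ℕ, ∃ n ≥ m, ∃ k k' : ℕ, k ≠ k' ∧
      (List.ofFn fun i : Fin n => b i) ++ [k] ∈ T ∧
      (List.ofFn fun i : Fin n => b i) ++ [k'] ∈ T

/-! ### Auxiliary machinery -/

open scoped Classical

/-- Extend a node of `T` by one chosen step. -/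
noncomputable def extOne (T : Set (List ℕ)) (hT : GoodTree T) (t : List ℕ) : List ℕ :=
  if h : t ∈ T then t ++ [(hT.succExists t h).choose] else t ++ [0]

lemma extOne_mem {T : Set (List ℕ)} (hT : GoodTree T) {t : List ℕ} (ht : t ∈ T) :
    extOne T hT t ∈ T := by
  rw [extOne, dif_pos ht]; exact (hT.succExists t ht).choose_spec

lemma extOne_prefix (T : Set (List ℕ)) (hT : GoodTree T) (t : List ℕ) :
    t <+: extOne T hT t := by
  unfold extOne; split <;> exact ⟨_, rfl⟩

lemma extOne_length (T : Set (List ℕ)) (hT : GoodTree T) (t : List ℕ) :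
    (extOne T hT t).length = t.length + 1 := by
  unfold extOne; split <;> simp

/-- Enumerate the nodes of `T` extending `u`. -/
noncomputable def enumAbv (T : Set (List ℕ)) (u : List ℕ) : ℕ → List ℕ :=
  if h : {v | v ∈ T ∧ u <+: v}.Nonempty then
    ((Set.to_countable {v | v ∈ T ∧ u <+: v}).exists_eq_range h).choose
  else fun _ => u

lemma enumAbv_spec {T : Set (List ℕ)} {u : List ℕ} (hu : u ∈ T) :
    (∀ k, enumAbv T u k ∈ T ∧ u <+: enumAbv T u k) ∧
    (∀ v, v ∈ T → u <+: v → ∃ k, enumAbv T u k = v) := by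
  have hne : {v | v ∈ T ∧ u <+: v}.Nonempty := ⟨u, hu, List.prefix_refl u⟩
  have hspec := ((Set.to_countable {v | v ∈ T ∧ u <+: v}).exists_eq_range hne).choose_spec
  simp only [enumAbv, dif_pos hne]
  constructor
  · intro k
    exact (Set.ext_iff.mp hspec _).mpr ⟨k, rfl⟩
  · intro v hv huv
    exact (Set.ext_iff.mp hspec v).mp ⟨hv, huv⟩

/-- The approximation map from Baire space sequences to nodes of `T`. -/
noncomputable def psiT (T : Set (List ℕ)) (hT : GoodTree T) (x : ℕ → ℕ) : ℕ → List ℕ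
  | 0 => []
  | n + 1 => extOne T hT (enumAbv T (psiT T hT x n) (x n))

lemma psiT_mem (T : Set (List ℕ)) (hT : GoodTree T) (x : ℕ → ℕ) (n : ℕ) :
    psiT T hT x n ∈ T := by
  induction n with
  | zero => exact hT.root
  | succ n ih =>
      exact extOne_mem hT ((enumAbv_spec ih).1 (x n)).1

lemma psiT_prefix_succ (T : Set (List ℕ)) (hT : GoodTree T) (x : ℕ → ℕ) (n : ℕ) :
    psiT T hT x n <+: psiT T hT x (n + 1) :=
  (((enumAbv_spec (psiT_mem T hT x n)).1 (x n)).2).trans (extOne_prefix T hT _)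

lemma psiT_prefix (T : Set (List ℕ)) (hT : GoodTree T) (x : ℕ → ℕ) {n m : ℕ} (h : n ≤ m) :
    psiT T hT x n <+: psiT T hT x m := by
  induction m with
  | zero => simp_all
  | succ m ih =>
      rcases Nat.lt_or_ge n (m + 1) with h' | h'
      · exact (ih (Nat.lt_succ_iff.mp h')).trans (psiT_prefix_succ T hT x m)
      · have : n = m + 1 := le_antisymm h h'
        subst this; exact List.prefix_refl _

lemma psiT_length (T : Set (List ℕ)) (hT : GoodTree T) (x : ℕ → ℕ) (n : ℕ) :
    n ≤ (psiT T hT x n).length := by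
  induction n with
  | zero => simp
  | succ n ih =>
      have h1 : (psiT T hT x n).length ≤ (enumAbv T (psiT T hT x n) (x n)).length :=
        (((enumAbv_spec (psiT_mem T hT x n)).1 (x n)).2).length_le
      have h2 : (psiT T hT x (n + 1)).length
          = (enumAbv T (psiT T hT x n) (x n)).length + 1 := extOne_length T hT _
      omega

lemma psiT_congr (T : Set (List ℕ)) (hT : GoodTree T) {x y : ℕ → ℕ} (n : ℕ)
    (h : ∀ i < n, x i = y i) : psiT T hT x n = psiT T hT y n := by
  induction n with
  | zero => rfl
  | succ n ih =>
      show extOne T hT _ = extOne T hT _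
      rw [ih (fun i hi => h i (Nat.lt_succ_of_lt hi)), h n (Nat.lt_succ_self n)]

/-- The branch of `T` determined by `x`. -/
noncomputable def brT (T : Set (List ℕ)) (hT : GoodTree T) (x : ℕ → ℕ) (j : ℕ) : ℕ :=
  (psiT T hT x (j + 1)).getD j 0

/-- Level-`n` restriction of the branch determined by `x`. -/
noncomputable def lvT (T : Set (List ℕ)) (hT : GoodTree T) (x : ℕ → ℕ) (n : ℕ) : List ℕ :=
  List.ofFn fun i : Fin n => brT T hT x i

lemma brT_eq (T : Set (List ℕ)) (hT : GoodTree T) (x : ℕ → ℕ) {j m : ℕ} (hj : j < m)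
    (hjm : j < (psiT T hT x m).length) : brT T hT x j = (psiT T hT x m)[j] := by
  have hpre : psiT T hT x (j + 1) <+: psiT T hT x m := psiT_prefix T hT x hj
  have hlen : j < (psiT T hT x (j + 1)).length := lt_of_lt_of_le (Nat.lt_succ_self j)
    (psiT_length T hT x (j + 1))
  rw [brT, List.getD_eq_getElem _ _ hlen, hpre.getElem hlen]

lemma lvT_length (T : Set (List ℕ)) (hT : GoodTree T) (x : ℕ → ℕ) (n : ℕ) :
    (lvT T hT x n).length = n := by simp [lvT]

lemma lvT_getElem (T : Set (List ℕ)) (hT : GoodTree T) (x : ℕ → ℕ) {n j : ℕ}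
    (h : j < (lvT T hT x n).length) : (lvT T hT x n)[j] = brT T hT x j := by
  simp [lvT]

lemma lvT_eq_take (T : Set (List ℕ)) (hT : GoodTree T) (x : ℕ → ℕ) (n : ℕ) :
    lvT T hT x n = (psiT T hT x n).take n := by
  have hlen : n ≤ (psiT T hT x n).length := psiT_length T hT x n
  apply List.ext_getElem
  · simp [lvT]; omega
  · intro j h1 h2
    have hj : j < n := by simpa [lvT] using h1
    rw [List.getElem_take, lvT_getElem T hT x h1]
    exact brT_eq T hT x hj (lt_of_lt_of_le hj hlen)

lemma lvT_mem (T : Set (List ℕ)) (hT : GoodTree T) (x : ℕ → ℕ) (n : ℕ) :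
    lvT T hT x n ∈ T := by
  rw [lvT_eq_take]
  exact hT.prefixClosed _ _ (List.take_prefix n _) (psiT_mem T hT x n)

lemma prefix_lvT (T : Set (List ℕ)) (hT : GoodTree T) (x : ℕ → ℕ) {v : List ℕ} {m n : ℕ}
    (h : v <+: psiT T hT x m) (hn : v.length ≤ n) : v <+: lvT T hT x n := by
  rw [List.prefix_iff_eq_take]
  apply List.ext_getElem
  · simp [lvT_length]; omega
  · intro j h1 h2
    have hjv : j < v.length := h1
    have hjn : j < n := lt_of_lt_of_le hjv hn
    set M := max m (j + 1) with hM
    have hvM : v <+: psiT T hT x M := h.trans (psiT_prefix T hT x (le_max_left _ _))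
    have hjM : j < (psiT T hT x M).length :=
      lt_of_lt_of_le hjv (hvM.length_le)
    have hv : v[j] = (psiT T hT x M)[j] := hvM.getElem hjv
    have hlvlen : j < (lvT T hT x n).length := by rw [lvT_length]; exact hjn
    have hlv : (List.take v.length (lvT T hT x n))[j] = (lvT T hT x n)[j] :=
      List.getElem_take
    rw [hv, hlv, lvT_getElem T hT x hlvlen]
    exact (brT_eq T hT x (lt_of_lt_of_le (Nat.lt_succ_self j) (le_max_right m (j+1))) hjM).symm

/-- Extending a node of `T` to any prescribed longer length. -/
lemma exists_extension {T : Set (List ℕ)} (hT : GoodTree T) {u : List ℕ} (hu : u ∈ T) (k : ℕ) :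
    ∃ t, t ∈ T ∧ u <+: t ∧ t.length = u.length + k := by
  induction k with
  | zero => exact ⟨u, hu, List.prefix_refl u, rfl⟩
  | succ k ih =>
      obtain ⟨t, ht, hut, hlt⟩ := ih
      exact ⟨extOne T hT t, extOne_mem hT ht, hut.trans (extOne_prefix T hT t),
        by rw [extOne_length T hT t, hlt]; omega⟩

/-- `PG(ℵ₀)` implies the Halpern–Läuchli theorem. -/
theorem stmt_19 (hPG : PGAlephZero) :
    ∀ (d : ℕ), 1 ≤ d → ∀ (T : Fin d → Set (List ℕ)), (∀ i, GoodTree (T i)) →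
    ∀ (C : Type) (_ : Finite C) (f : (Fin d → List ℕ) → C),
    ∃ (l : ℕ) (t : Fin d → List ℕ),
      (∀ i, t i ∈ T i ∧ (t i).length = l) ∧
      ∃ n > l, ∃ D : Fin d → Set (List ℕ),
        (∀ i, D i ⊆ {s ∈ T i | s.length = n}) ∧
        (∀ i, ∀ m : ℕ, (t i) ++ [m] ∈ T i → ∃ s ∈ D i, (t i) ++ [m] <+: s) ∧
        ∃ c : C, ∀ x : Fin d → List ℕ, (∀ i, x i ∈ D i) → f x = c := by
  intro d hd T hT C hCfin f
  haveI : Finite C := hCfin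
  -- an ultrafilter extending the cofinite filter
  set U : Ultrafilter ℕ := Ultrafilter.of Filter.cofinite with hUdef
  have hUcof : ∀ s : Set ℕ, sᶜ.Finite → s ∈ U := by
    intro s hs
    exact Ultrafilter.of_le Filter.cofinite (Filter.mem_cofinite.mpr hs)
  -- the induced coloring of tuples of elements of Baire space
  have hcolor : ∀ X : Fin d → (ℕ → ℕ),
      ∃ c : C, {n : ℕ | f (fun i => lvT (T i) (hT i) (X i) n) = c} ∈ U := by
    intro X
    by_contra hcon
    push_neg at hcon
    have h2 : ∀ c : C, {n : ℕ | f (fun i => lvT (T i) (hT i) (X i) n) = c}ᶜ ∈ U :=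
      fun c => Ultrafilter.compl_mem_iff_notMem.mpr (hcon c)
    have h3 : (⋂ c : C, {n : ℕ | f (fun i => lvT (T i) (hT i) (X i) n) = c}ᶜ) ∈ U :=
      Filter.iInter_mem.mpr h2
    obtain ⟨n, hn⟩ := Ultrafilter.nonempty_of_mem h3
    simp only [Set.mem_iInter, Set.mem_compl_iff, Set.mem_setOf_eq] at hn
    exact hn _ rfl
  set F : (Fin d → (ℕ → ℕ)) → C := fun X => (hcolor X).choose with hFdef
  have hFspec : ∀ X : Fin d → (ℕ → ℕ),
      {n : ℕ | f (fun i => lvT (T i) (hT i) (X i) n) = F X} ∈ U :=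
    fun X => (hcolor X).choose_spec
  -- apply PG(ℵ₀)
  obtain ⟨E, hEdense, c, hc⟩ := hPG d hd C hCfin F
  choose s hs using hEdense
  -- the nodes over which the images of the E i are dense
  set u : Fin d → List ℕ :=
    fun i => psiT (T i) (hT i) (fun j => (s i).getD j 0) (s i).length with hudef
  have hu_mem : ∀ i, u i ∈ T i := fun i => psiT_mem _ _ _ _
  -- density of the images
  have hdense : ∀ i (v : List ℕ), v ∈ T i → u i <+: v →
      ∃ x ∈ E i, ∀ n, v.length ≤ n → v <+: lvT (T i) (hT i) x n := by
    intro i v hv huv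
    obtain ⟨k, hk⟩ := (enumAbv_spec (hu_mem i)).2 v hv huv
    obtain ⟨x, hxE, hxc⟩ := hs i (s i ++ [k]) ⟨[k], rfl⟩
    refine ⟨x, hxE, ?_⟩
    have hxagree : ∀ j < (s i).length, x j = (fun j => (s i).getD j 0) j := by
      intro j hj
      have hjlen : j < (s i ++ [k]).length := by simp; omega
      have := hxc j hjlen
      simp only [List.get_eq_getElem] at this
      rw [this, List.getElem_append_left hj]
      exact (List.getD_eq_getElem _ _ hj).symm
    have h1 : psiT (T i) (hT i) x (s i).length = u i :=
      psiT_congr (T i) (hT i) (s i).length hxagree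
    have hxk : x (s i).length = k := by
      have hjlen : (s i).length < (s i ++ [k]).length := by simp
      have := hxc (s i).length hjlen
      simp only [List.get_eq_getElem] at this
      rw [this, List.getElem_concat_length rfl]
    have h2 : v <+: psiT (T i) (hT i) x ((s i).length + 1) := by
      show v <+: extOne (T i) (hT i)
        (enumAbv (T i) (psiT (T i) (hT i) x (s i).length) (x (s i).length))
      rw [h1, hxk, hk]
      exact extOne_prefix _ _ v
    exact fun n hn => prefix_lvT (T i) (hT i) x h2 hn
  -- the common level l and the nodes t i
  set l : ℕ := Finset.univ.sup (fun i => (u i).length) with hldef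
  have hul : ∀ i, (u i).length ≤ l := fun i => Finset.le_sup (f := fun i => (u i).length) (Finset.mem_univ i)
  have hext : ∀ i, ∃ t, t ∈ T i ∧ u i <+: t ∧ t.length = l := by
    intro i
    obtain ⟨t, ht, hut, hlt⟩ := exists_extension (hT i) (hu_mem i) (l - (u i).length)
    exact ⟨t, ht, hut, by have := hul i; omega⟩
  choose t ht_mem ht_pre ht_len using hext
  -- choose witnesses in E i through each immediate successor of t i
  have hχ : ∀ i (m : ℕ), ∃ x ∈ E i, ∀ n,
      (if t i ++ [m] ∈ T i then t i ++ [m] else t i).length ≤ n →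
      (if t i ++ [m] ∈ T i then t i ++ [m] else t i) <+: lvT (T i) (hT i) x n := by
    intro i m
    by_cases h : t i ++ [m] ∈ T i
    · simp only [if_pos h]
      exact hdense i (t i ++ [m]) h ((ht_pre i).trans ⟨[m], rfl⟩)
    · simp only [if_neg h]
      exact hdense i (t i) (ht_mem i) (ht_pre i)
  choose χ hχE hχlv using hχ
  -- the finite set of choice functions
  set S : Fin d → Set ℕ := fun i => {m | t i ++ [m] ∈ T i} with hSdef
  have hSfin : ∀ i, (S i).Finite := fun i => (hT i).finBranching (t i) (ht_mem i)
  set Sig : Set (Fin d → ℕ) := Set.univ.pi S with hSigdef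
  have hSigfin : Sig.Finite := Set.Finite.pi hSfin
  -- a good level n
  have hA : ({n : ℕ | l < n} ∩
      ⋂ σ ∈ Sig, {n : ℕ | f (fun i => lvT (T i) (hT i) (χ i (σ i)) n) = c}) ∈ U := by
    apply Filter.inter_mem
    · apply hUcof
      have : {n : ℕ | l < n}ᶜ ⊆ Set.Iic l := by
        intro n hn
        simp only [Set.mem_compl_iff, Set.mem_setOf_eq, not_lt] at hn
        exact hn
      exact (Set.finite_Iic l).subset this
    · rw [Filter.biInter_mem hSigfin]
      intro σ hσ
      have hFX : F (fun i => χ i (σ i)) = c := hc _ (fun i => hχE i (σ i))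
      have := hFspec (fun i => χ i (σ i))
      rwa [hFX] at this
  obtain ⟨n, hn⟩ := Ultrafilter.nonempty_of_mem hA
  obtain ⟨hnl, hnA⟩ := hn
  simp only [Set.mem_setOf_eq] at hnl
  -- the dense sets D i
  refine ⟨l, t, fun i => ⟨ht_mem i, ht_len i⟩, n, hnl,
    fun i => (fun m => lvT (T i) (hT i) (χ i m) n) '' (S i), ?_, ?_, c, ?_⟩
  · rintro i _ ⟨m, _, rfl⟩
    exact ⟨lvT_mem _ _ _ _, lvT_length _ _ _ _⟩
  · intro i m hm
    refine ⟨lvT (T i) (hT i) (χ i m) n, ⟨m, hm, rfl⟩, ?_⟩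
    have := hχlv i m n
    rw [if_pos hm] at this
    apply this
    have : (t i ++ [m]).length = l + 1 := by simp [ht_len i]
    omega
  · intro x hx
    have hxi : ∀ i, ∃ m ∈ S i, lvT (T i) (hT i) (χ i m) n = x i := by
      intro i
      obtain ⟨m, hm, heq⟩ := hx i
      exact ⟨m, hm, heq⟩
    choose σ hσS hσeq using hxi
    have hσ : σ ∈ Sig := by
      intro i _
      exact hσS i
    have := Set.mem_iInter₂.mp hnA σ hσ
    simp only [Set.mem_setOf_eq] at this
    rw [← this]
    congr 1
    funext i
    rw [hσeq i]
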